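/- Fix real numbers β > 0, q ∈ ℝ, q_i > 0 with Σ√q_i < ∞. The function (β_i)_{i≥1} ↦ (β + Σ_i β_i)(q + Σ_i q_i/β_i) over positive sequences has a global minimiser if and only if q > 0, in which case the minimiser is β_i = √(β/q)·√q_i. -/

import Mathlib

-- Cauchy–Schwarz for tsums
lemma cs_tsum (b f : ℕ → ℝ) (hb : ∀ i, 0 ≤ b i) (hf : ∀ i, 0 ≤ f i)
    (hsb : Summable b) (hsf : Summable f)
    (hs : Summable fun i => Real.sqrt (b i * f i)) :
    (∑' i, Real.sqrt (b i * f i))^2 ≤ (∑' i, b i) * (∑' i, f i) := by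
  have hB : 0 ≤ ∑' i, b i := tsum_nonneg hb
  have hF : 0 ≤ ∑' i, f i := tsum_nonneg hf
  have key : ∑' i, Real.sqrt (b i * f i) ≤ Real.sqrt ((∑' i, b i) * (∑' i, f i)) := by
    apply Summable.tsum_le_of_sum_le hs
    intro s
    have h1 : (∑ i ∈ s, Real.sqrt (b i * f i))^2 ≤ (∑ i ∈ s, b i) * (∑ i ∈ s, f i) := by
      have h := Finset.sum_mul_sq_le_sq_mul_sq s (fun i => Real.sqrt (b i)) (fun i => Real.sqrt (f i))
      calc (∑ i ∈ s, Real.sqrt (b i * f i))^2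
          = (∑ i ∈ s, Real.sqrt (b i) * Real.sqrt (f i))^2 := by
            congr 1; apply Finset.sum_congr rfl; intro i _; exact Real.sqrt_mul (hb i) (f i)
        _ ≤ (∑ i ∈ s, Real.sqrt (b i)^2) * (∑ i ∈ s, Real.sqrt (f i)^2) := h
        _ = (∑ i ∈ s, b i) * (∑ i ∈ s, f i) := by
            congr 1 <;> (apply Finset.sum_congr rfl; intro i _)
            · exact Real.sq_sqrt (hb i)
            · exact Real.sq_sqrt (hf i)
    have h2 : (∑ i ∈ s, b i) * (∑ i ∈ s, f i) ≤ (∑' i, b i) * (∑' i, f i) := by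
      apply mul_le_mul (Summable.sum_le_tsum s (fun i _ => hb i) hsb)
        (Summable.sum_le_tsum s (fun i _ => hf i) hsf)
        (Finset.sum_nonneg fun i _ => hf i) hB
    have h3 : 0 ≤ ∑ i ∈ s, Real.sqrt (b i * f i) :=
      Finset.sum_nonneg fun i _ => Real.sqrt_nonneg _
    rw [show (∑ i ∈ s, Real.sqrt (b i * f i)) = Real.sqrt ((∑ i ∈ s, Real.sqrt (b i * f i))^2) from (Real.sqrt_sq h3).symm]
    exact Real.sqrt_le_sqrt (h1.trans h2)
  have hS : 0 ≤ ∑' i, Real.sqrt (b i * f i) := tsum_nonneg fun i => Real.sqrt_nonneg _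
  calc (∑' i, Real.sqrt (b i * f i))^2 ≤ Real.sqrt ((∑' i, b i) * (∑' i, f i))^2 := by
        apply pow_le_pow_left₀ hS key
    _ = (∑' i, b i) * (∑' i, f i) := Real.sq_sqrt (mul_nonneg hB hF)

-- lower bound
lemma lower_bound (β q : ℝ) (hβ : 0 < β) (hq : 0 < q) (qq : ℕ → ℝ)
    (hqq : ∀ i, 0 < qq i) (hsum : Summable fun i => Real.sqrt (qq i))
    (b : ℕ → ℝ) (hb : ∀ i, 0 < b i) (hsb : Summable b)
    (hsd : Summable fun i => qq i / b i) :
    (Real.sqrt (β*q) + ∑' i, Real.sqrt (qq i))^2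
      ≤ (β + ∑' i, b i) * (q + ∑' i, qq i / b i) := by
  set B := ∑' i, b i with hBdef
  set Q := ∑' i, qq i / b i with hQdef
  set S := ∑' i, Real.sqrt (qq i) with hSdef
  have hB : 0 ≤ B := tsum_nonneg fun i => (hb i).le
  have hQ : 0 ≤ Q := tsum_nonneg fun i => (div_pos (hqq i) (hb i)).le
  have hS : 0 ≤ S := tsum_nonneg fun i => Real.sqrt_nonneg _
  have heq : ∀ i, Real.sqrt (qq i) = Real.sqrt (b i * (qq i / b i)) := by
    intro i; rw [mul_div_cancel₀ _ (hb i).ne']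
  have hCS : S^2 ≤ B * Q := by
    have := cs_tsum b (fun i => qq i / b i) (fun i => (hb i).le)
      (fun i => (div_pos (hqq i) (hb i)).le) hsb hsd
      (by exact hsum.congr fun i => heq i)
    rw [hSdef]
    calc (∑' i, Real.sqrt (qq i))^2 = (∑' i, Real.sqrt (b i * (qq i / b i)))^2 := by
          congr 1; exact tsum_congr heq
      _ ≤ B * Q := this
  -- AM-GM: 2 √(βq) S ≤ βQ + Bq
  have h1 : 2 * Real.sqrt (β*Q) * Real.sqrt (B*q) ≤ β*Q + B*q := by
    have h := two_mul_le_add_sq (Real.sqrt (β*Q)) (Real.sqrt (B*q))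
    rwa [Real.sq_sqrt (mul_nonneg hβ.le hQ), Real.sq_sqrt (mul_nonneg hB hq.le)] at h
  have h2 : Real.sqrt (β*q) * S ≤ Real.sqrt (β*Q) * Real.sqrt (B*q) := by
    rw [← Real.sqrt_mul (mul_nonneg hβ.le hQ)]
    have hSle : S ≤ Real.sqrt (B*Q) := by
      rw [show S = Real.sqrt (S^2) from (Real.sqrt_sq hS).symm]
      exact Real.sqrt_le_sqrt hCS
    calc Real.sqrt (β*q) * S ≤ Real.sqrt (β*q) * Real.sqrt (B*Q) :=
          mul_le_mul_of_nonneg_left hSle (Real.sqrt_nonneg _)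
      _ = Real.sqrt (β*q*(B*Q)) := (Real.sqrt_mul (mul_nonneg hβ.le hq.le) _).symm
      _ = Real.sqrt (β*Q*(B*q)) := by ring_nf
  have hbq : Real.sqrt (β*q)^2 = β*q := Real.sq_sqrt (mul_nonneg hβ.le hq.le)
  nlinarith [h1, h2, hCS, hbq]

-- value at the candidate minimiser
lemma value_eq (β q : ℝ) (hβ : 0 < β) (hq : 0 < q) (qq : ℕ → ℝ)
    (hqq : ∀ i, 0 < qq i) (hsum : Summable fun i => Real.sqrt (qq i)) :
    (β + ∑' i, Real.sqrt (β/q) * Real.sqrt (qq i))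
        * (q + ∑' i, qq i / (Real.sqrt (β/q) * Real.sqrt (qq i)))
      = (Real.sqrt (β*q) + ∑' i, Real.sqrt (qq i))^2 := by
  set c := Real.sqrt (β/q) with hcdef
  have hc : 0 < c := Real.sqrt_pos.2 (div_pos hβ hq)
  set S := ∑' i, Real.sqrt (qq i) with hSdef
  have h1 : ∑' i, c * Real.sqrt (qq i) = c * S := tsum_mul_left
  have h2 : ∑' i, qq i / (c * Real.sqrt (qq i)) = S / c := by
    rw [hSdef, ← tsum_div_const]
    apply tsum_congr
    intro i
    have hs : 0 < Real.sqrt (qq i) := Real.sqrt_pos.2 (hqq i)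
    rw [← Real.sq_sqrt (hqq i).le]
    field_simp
    ring
    rw [Real.sqrt_sq hs.le]
  rw [h1, h2]
  have hc2 : c^2 = β/q := Real.sq_sqrt (div_pos hβ hq).le
  have hcq : c * q = Real.sqrt (β*q) := by
    rw [hcdef, show β*q = β/q*q^2 by field_simp, Real.sqrt_mul (div_pos hβ hq).le,
      Real.sqrt_sq hq.le]
  have hβeq : β = c^2 * q := by rw [hc2]; field_simp
  rw [← hcq, hβeq]
  field_simp

/-- Fix `β > 0`, `q ∈ ℝ`, and `q_i > 0` with `Σ √q_i < ∞`. The function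
`(β_i) ↦ (β + Σ_i β_i)(q + Σ_i q_i/β_i)`, over positive sequences (with both series
summable), has a global minimiser if and only if `q > 0`, in which case the minimiser
is `β_i = √(β/q)·√q_i`. -/
theorem stmt_13 (β : ℝ) (hβ : 0 < β) (q : ℝ) (qq : ℕ → ℝ) (hqq : ∀ i, 0 < qq i)
    (hsum : Summable fun i => Real.sqrt (qq i)) :
    ((∃ b : ℕ → ℝ,
        ((∀ i, 0 < b i) ∧ Summable b ∧ Summable (fun i => qq i / b i)) ∧
        ∀ b' : ℕ → ℝ,
          ((∀ i, 0 < b' i) ∧ Summable b' ∧ Summable (fun i => qq i / b' i)) →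
          (β + ∑' i, b i) * (q + ∑' i, qq i / b i)
            ≤ (β + ∑' i, b' i) * (q + ∑' i, qq i / b' i))
      ↔ 0 < q) ∧
    (0 < q →
      ((∀ i, 0 < Real.sqrt (β/q) * Real.sqrt (qq i)) ∧
        Summable (fun i => Real.sqrt (β/q) * Real.sqrt (qq i)) ∧
        Summable (fun i => qq i / (Real.sqrt (β/q) * Real.sqrt (qq i)))) ∧
      ∀ b' : ℕ → ℝ,
        ((∀ i, 0 < b' i) ∧ Summable b' ∧ Summable (fun i => qq i / b' i)) →
        (β + ∑' i, Real.sqrt (β/q) * Real.sqrt (qq i))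
            * (q + ∑' i, qq i / (Real.sqrt (β/q) * Real.sqrt (qq i)))
          ≤ (β + ∑' i, b' i) * (q + ∑' i, qq i / b' i)) := by
  -- second part first
  have part2 : 0 < q →
      ((∀ i, 0 < Real.sqrt (β/q) * Real.sqrt (qq i)) ∧
        Summable (fun i => Real.sqrt (β/q) * Real.sqrt (qq i)) ∧
        Summable (fun i => qq i / (Real.sqrt (β/q) * Real.sqrt (qq i)))) ∧
      ∀ b' : ℕ → ℝ,
        ((∀ i, 0 < b' i) ∧ Summable b' ∧ Summable (fun i => qq i / b' i)) →
        (β + ∑' i, Real.sqrt (β/q) * Real.sqrt (qq i))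
            * (q + ∑' i, qq i / (Real.sqrt (β/q) * Real.sqrt (qq i)))
          ≤ (β + ∑' i, b' i) * (q + ∑' i, qq i / b' i) := by
    intro hq
    set c := Real.sqrt (β/q) with hcdef
    have hc : 0 < c := Real.sqrt_pos.2 (div_pos hβ hq)
    have hpos : ∀ i, 0 < c * Real.sqrt (qq i) :=
      fun i => mul_pos hc (Real.sqrt_pos.2 (hqq i))
    have hs1 : Summable (fun i => c * Real.sqrt (qq i)) := hsum.mul_left c
    have hs2 : Summable (fun i => qq i / (c * Real.sqrt (qq i))) := by
      apply (hsum.mul_left (1/c)).congr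
      intro i
      have hsq : 0 < Real.sqrt (qq i) := Real.sqrt_pos.2 (hqq i)
      rw [eq_comm, ← Real.sq_sqrt (hqq i).le]
      field_simp
      ring
      rw [Real.sqrt_sq hsq.le]
    refine ⟨⟨hpos, hs1, hs2⟩, fun b' ⟨hb', hsb', hsd'⟩ => ?_⟩
    rw [value_eq β q hβ hq qq hqq hsum]
    exact lower_bound β q hβ hq qq hqq hsum b' hb' hsb' hsd'
  constructor
  · constructor
    · -- minimiser exists → q > 0
      rintro ⟨b, ⟨hb, hsb, hsd⟩, hmin⟩
      by_contra hq
      push_neg at hq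
      have hB : 0 ≤ ∑' i, b i := tsum_nonneg fun i => (hb i).le
      have hQ : 0 < ∑' i, qq i / b i :=
        Summable.tsum_pos hsd (fun i => (div_pos (hqq i) (hb i)).le) 0 (div_pos (hqq 0) (hb 0))
      have h2b : Summable (fun i => 2 * b i) := hsb.mul_left 2
      have h2d : Summable (fun i => qq i / (2 * b i)) := by
        apply (hsd.mul_left (1/2)).congr
        intro i
        rw [eq_comm, div_mul_eq_div_div]
        ring
      have := hmin (fun i => 2 * b i)
        ⟨fun i => mul_pos two_pos (hb i), h2b, h2d⟩
      have e1 : ∑' i, 2 * b i = 2 * ∑' i, b i := tsum_mul_left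
      have e2 : ∑' i, qq i / (2 * b i) = (∑' i, qq i / b i) / 2 := by
        rw [← tsum_div_const]
        apply tsum_congr
        intro i
        rw [div_mul_eq_div_div]
        ring
      rw [e1, e2] at this
      set B := ∑' i, b i
      set Q := ∑' i, qq i / b i
      nlinarith [this, hQ, hB, hβ, hq]
    · -- q > 0 → minimiser exists
      intro hq
      obtain ⟨hcond, hmin⟩ := part2 hq
      exact ⟨_, hcond, hmin⟩
  · exact part2
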